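/- arXiv:2203.13633 — 2 statements merged into one kernel-verified Lean document; each statement's English description precedes it below -/
import Mathlib

section
/- Let p ≥ 1 be an integer and α a real number. The p×p stable spline matrix K defined (with 1-based indexing) by K(i,j) = α^{max(i,j)} has determinant det K = α^{p(p+1)/2} (1 − α)^{p−1}. -/
lemma tele' (f : ℕ → ℝ) (m n : ℕ) (h : m ≤ n) :
    ∑ k ∈ Finset.Ico m n, (f k - f (k + 1)) = f m - f n := by
  induction n, h using Nat.le_induction with
  | base => simp
  | succ n hn ih => rw [Finset.sum_Ico_succ_top (by omega), ih]; ring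

lemma tele (α : ℝ) (q m : ℕ) (hm : m ≤ q) :
    ∑ k ∈ Finset.Ico m (q + 1),
      (if k < q then α ^ (k + 1) - α ^ (k + 2) else α ^ (q + 1)) = α ^ (m + 1) := by
  rw [Finset.sum_Ico_succ_top (by omega)]
  rw [Finset.sum_congr rfl (fun k hk => by rw [if_pos (Finset.mem_Ico.mp hk).2])]
  rw [if_neg (lt_irrefl q), tele' (fun k => α ^ (k + 1)) m q hm]
  ring

/-- The `p × p` stable spline matrix `K` with `K(i,j) = α ^ max(i,j)` (1-based indexing)
has determinant `α ^ (p(p+1)/2) * (1 - α) ^ (p - 1)`, for every real `α`. -/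
theorem stable_spline_det (p : ℕ) (hp : 1 ≤ p) (α : ℝ)
    (K : Matrix (Fin p) (Fin p) ℝ)
    (hK : ∀ i j : Fin p, K i j = α ^ (max (i.1 + 1) (j.1 + 1))) :
    K.det = α ^ (p * (p + 1) / 2) * (1 - α) ^ (p - 1) := by
  obtain ⟨q, rfl⟩ : ∃ q, p = q + 1 := ⟨p - 1, by omega⟩
  set D : ℕ → ℝ := fun k => if k < q then α ^ (k + 1) - α ^ (k + 2) else α ^ (q + 1) with hD
  set E : Matrix (Fin (q+1)) (Fin (q+1)) ℝ := Matrix.of fun i j => if i ≤ j then 1 else 0 with hE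
  set T : Matrix (Fin (q+1)) (Fin (q+1)) ℝ :=
    Matrix.of fun i j => if j ≤ i then D i.1 else 0 with hT
  have hKE : K = E * T := by
    ext i j
    rw [hK, Matrix.mul_apply]
    have key : ∀ k : Fin (q+1), E i k * T k j = if max i.1 j.1 ≤ k.1 then D k.1 else 0 := by
      intro k
      simp only [hE, hT, Matrix.of_apply, Fin.le_def]
      by_cases h1 : i.1 ≤ k.1 <;> by_cases h2 : j.1 ≤ k.1 <;>
        simp [h1, h2, sup_le_iff]
    rw [Finset.sum_congr rfl (fun k _ => key k)]
    rw [Fin.sum_univ_eq_sum_range (fun k => if max i.1 j.1 ≤ k then D k else 0)]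
    rw [← Finset.sum_filter]
    have hfil : (Finset.range (q+1)).filter (fun k => max i.1 j.1 ≤ k)
        = Finset.Ico (max i.1 j.1) (q+1) := by
      ext k; simp [Finset.mem_filter, Finset.mem_Ico, Finset.mem_range, and_comm]
    rw [hfil, hD, tele α q (max i.1 j.1) (by omega)]
    congr 1
    omega
  rw [hKE, Matrix.det_mul]
  have hdE : E.det = 1 := by
    rw [Matrix.det_of_upperTriangular]
    · simp [hE]
    · intro i j hij
      simp only [hE, Matrix.of_apply]
      rw [if_neg (by exact not_le.mpr hij)]
  have hdT : T.det = ∏ i : Fin (q+1), D i.1 := by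
    rw [Matrix.det_of_lowerTriangular]
    · exact Finset.prod_congr rfl fun i _ => by simp [hT]
    · intro i j hij
      simp only [hT, Matrix.of_apply]
      rw [if_neg (by exact not_le.mpr hij)]
  rw [hdE, hdT, one_mul]
  rw [Fin.prod_univ_castSucc]
  have hlast : D (Fin.last q).1 = α ^ (q + 1) := by
    simp [hD]
  have hcast : ∀ i : Fin q, D (Fin.castSucc i).1 = α ^ (i.1 + 1) * (1 - α) := by
    intro i
    simp only [hD, Fin.coe_castSucc]
    rw [if_pos i.2]
    ring
  rw [hlast, Finset.prod_congr rfl (fun i _ => hcast i), Finset.prod_mul_distrib,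
    Finset.prod_const, Finset.card_univ, Fintype.card_fin, Finset.prod_pow_eq_pow_sum]
  have hsum : (∑ i : Fin q, (i.1 + 1)) + (q + 1) = (q + 1) * (q + 1 + 1) / 2 := by
    rw [Fin.sum_univ_eq_sum_range (fun i => i + 1), Finset.sum_add_distrib,
      Finset.sum_const, Finset.card_range, smul_eq_mul, mul_one]
    have h1 := Finset.sum_range_id_mul_two q
    have h2 : (q + 1) * (q + 1 + 1) = q * (q - 1) + (2 * q + 1) * 2 := by
      cases q with
      | zero => rfl
      | succ n => simp [Nat.succ_sub_one]; ring
    omega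
  calc (α ^ ∑ i : Fin q, (i.1 + 1)) * (1 - α) ^ q * α ^ (q + 1)
      = α ^ ((∑ i : Fin q, (i.1 + 1)) + (q + 1)) * (1 - α) ^ q := by rw [pow_add]; ring
    _ = α ^ ((q + 1) * (q + 1 + 1) / 2) * (1 - α) ^ (q + 1 - 1) := by rw [hsum]; simp
end

section
/- Let p ≥ 1 be an integer and α a real number with 0 < α < 1. Then the p×p stable spline matrix K with entries K(i,j) = α^{max(i,j)} is symmetric positive definite (in particular invertible). -/
open Finset

private lemma telescope_sum (β : ℝ) (m : ℕ) :
    ∑ k ∈ Finset.range (m + 1),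
      (if k = 0 then β else β ^ (k + 1) - β ^ k) = β ^ (m + 1) := by
  induction m with
  | zero => simp
  | succ n ih =>
      rw [Finset.sum_range_succ, ih]
      simp only [Nat.succ_ne_zero, if_false]
      ring

/-- For `0 < α < 1`, the `p × p` stable spline matrix `K` with entries
`K(i,j) = α ^ max(i,j)` (1-based indexing) is symmetric positive definite,
and in particular invertible. -/
theorem stable_spline_posDef (p : ℕ) (hp : 1 ≤ p) (α : ℝ) (hα0 : 0 < α) (hα1 : α < 1)
    (K : Matrix (Fin p) (Fin p) ℝ)
    (hK : ∀ i j : Fin p, K i j = α ^ (max (i.1 + 1) (j.1 + 1))) :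
    K.IsSymm ∧ K.PosDef ∧ IsUnit K.det := by
  have hαne : α ≠ 0 := hα0.ne'
  have hsymm : K.IsSymm := by
    apply Matrix.IsSymm.ext
    intro i j
    rw [hK, hK, max_comm]
  set β : ℝ := α⁻¹ with hβ
  have hβ1 : 1 < β := (one_lt_inv_iff₀).2 ⟨hα0, hα1⟩
  have hβ0 : 0 < β := lt_trans one_pos hβ1
  set d : ℕ → ℝ := fun k => if k = 0 then β else β ^ (k + 1) - β ^ k with hd
  have hdpos : ∀ k, 0 < d k := by
    intro k
    cases k with
    | zero => simpa [hd] using hβ0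
    | succ n =>
        simp only [hd, Nat.succ_ne_zero, if_false]
        have : β ^ (n + 1) < β ^ (n + 1 + 1) := pow_lt_pow_right₀ hβ1 (by omega)
        linarith
  have hdecomp : ∀ m : ℕ, m < p →
      β ^ (m + 1) = ∑ k ∈ Finset.range p, (if k ≤ m then d k else 0) := by
    intro m hm
    rw [Finset.sum_ite, Finset.sum_const_zero, add_zero]
    have hfil : Finset.filter (fun k => k ≤ m) (Finset.range p) = Finset.range (m + 1) := by
      ext k; simp only [Finset.mem_filter, Finset.mem_range, Nat.lt_succ_iff]; omega
    rw [hfil, telescope_sum]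
  have hposdef : K.PosDef := by
    refine Matrix.PosDef.of_dotProduct_mulVec_pos ?_ ?_
    · exact hsymm
    · intro x hx
      set y : Fin p → ℝ := fun i => α ^ (i.1 + 1) * x i with hy
      set S : ℕ → ℝ := fun k => ∑ i : Fin p, (if k ≤ i.1 then y i else 0) with hS
      have hentry : ∀ i j : Fin p, x i * (K i j * x j)
          = ∑ k ∈ Finset.range p,
              d k * ((if k ≤ i.1 then y i else 0) * (if k ≤ j.1 then y j else 0)) := by
        intro i j
        have hminp : min i.1 j.1 < p := lt_of_le_of_lt (min_le_left _ _) i.2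
        have hpow : α ^ (i.1 + 1) * α ^ (j.1 + 1)
            = α ^ (max (i.1 + 1) (j.1 + 1)) * α ^ (min i.1 j.1 + 1) := by
          rw [← pow_add, ← pow_add]; congr 1; omega
        have step1 : x i * (K i j * x j) = y i * y j * β ^ (min i.1 j.1 + 1) := by
          rw [hK]
          simp only [hy, hβ, ← inv_pow]
          have hne : α ^ (min i.1 j.1 + 1) ≠ 0 := pow_ne_zero _ hαne
          have h3 : α ^ (min i.1 j.1 + 1) * (α ^ (min i.1 j.1 + 1))⁻¹ = 1 := mul_inv_cancel₀ hne
          linear_combination (-(x i * x j * α ^ (max (i.1 + 1) (j.1 + 1)))) * h3 - (x i * x j * (α ^ (min i.1 j.1 + 1))⁻¹) * hpow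
        rw [step1, hdecomp (min i.1 j.1) hminp, Finset.mul_sum]
        refine Finset.sum_congr rfl fun k hk => ?_
        by_cases h1 : k ≤ i.1 <;> by_cases h2 : k ≤ j.1 <;>
          simp [h1, h2, le_min_iff] <;> ring
      have key : dotProduct (star x) (K.mulVec x)
          = ∑ k ∈ Finset.range p, d k * (S k * S k) := by
        calc dotProduct (star x) (K.mulVec x)
            = ∑ i : Fin p, ∑ j : Fin p, x i * (K i j * x j) := by
              simp [dotProduct, Matrix.mulVec, Finset.mul_sum]
          _ = ∑ i : Fin p, ∑ j : Fin p, ∑ k ∈ Finset.range p,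
                d k * ((if k ≤ i.1 then y i else 0) * (if k ≤ j.1 then y j else 0)) :=
              Finset.sum_congr rfl fun i _ => Finset.sum_congr rfl fun j _ => hentry i j
          _ = ∑ i : Fin p, ∑ k ∈ Finset.range p, ∑ j : Fin p,
                d k * ((if k ≤ i.1 then y i else 0) * (if k ≤ j.1 then y j else 0)) :=
              Finset.sum_congr rfl fun i _ => Finset.sum_comm
          _ = ∑ k ∈ Finset.range p, ∑ i : Fin p, ∑ j : Fin p,
                d k * ((if k ≤ i.1 then y i else 0) * (if k ≤ j.1 then y j else 0)) :=
              Finset.sum_comm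
          _ = ∑ k ∈ Finset.range p, d k * (S k * S k) := by
              refine Finset.sum_congr rfl fun k _ => ?_
              simp only [hS, ← Finset.mul_sum, ← Finset.sum_mul]
      rw [key]
      -- find the largest index where y is nonzero
      have hyne : ∃ i, y i ≠ 0 := by
        by_contra h
        push_neg at h
        apply hx
        funext i
        have h1 := h i
        simp only [hy] at h1
        have h2 : α ^ (i.1 + 1) ≠ 0 := pow_ne_zero _ hαne
        have := mul_eq_zero.1 h1
        simpa [h2] using this
      set s := Finset.univ.filter (fun i : Fin p => y i ≠ 0) with hsdef
      have hsne : s.Nonempty := by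
        obtain ⟨i, hi⟩ := hyne
        exact ⟨i, by simp [hsdef, hi]⟩
      set i0 := s.max' hsne with hi0def
      have hi0 : y i0 ≠ 0 := (Finset.mem_filter.1 (s.max'_mem hsne)).2
      have hSi0 : S i0.1 = y i0 := by
        simp only [hS]
        rw [Finset.sum_eq_single i0]
        · simp
        · intro i _ hne
          by_cases hle : i0.1 ≤ i.1
          · rw [if_pos hle]
            by_contra hyi
            have : i ∈ s := by simp [hsdef, hyi]
            have hle2 : i ≤ i0 := s.le_max' i this
            exact hne (le_antisymm hle2 hle)
          · rw [if_neg hle]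
        · simp
      apply Finset.sum_pos'
      · intro k _
        have h1 := (hdpos k).le
        nlinarith [mul_self_nonneg (S k)]
      · refine ⟨i0.1, Finset.mem_range.2 i0.2, ?_⟩
        rw [hSi0]
        exact mul_pos (hdpos _) (mul_self_pos.2 hi0)
  exact ⟨hsymm, hposdef, isUnit_iff_ne_zero.2 hposdef.det_pos.ne'⟩
end
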